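/- arXiv:1501.04302 — 15 statements merged into one kernel-verified Lean document; each statement's English description precedes it below -/
import Mathlib

section
/- For any semigroup S and any subset A of S, the separator Sep(A) is a subsemigroup of S (possibly empty): if x, y ∈ Sep(A), then xy ∈ Sep(A). -/
def separator {S : Type*} [Mul S] (A : Set S) : Set S :=
  {x | (∀ a ∈ A, x * a ∈ A) ∧ (∀ a ∈ A, a * x ∈ A) ∧
       (∀ a ∉ A, x * a ∉ A) ∧ (∀ a ∉ A, a * x ∉ A)}

theorem sep_subsemigroup {S : Type*} [Semigroup S] (A : Set S)
    {x y : S} (hx : x ∈ separator A) (hy : y ∈ separator A) : x * y ∈ separator A := by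
  obtain ⟨h1, h2, h3, h4⟩ := hx
  obtain ⟨g1, g2, g3, g4⟩ := hy
  refine ⟨fun a ha => ?_, fun a ha => ?_, fun a ha => ?_, fun a ha => ?_⟩
  · rw [mul_assoc]; exact h1 _ (g1 _ ha)
  · rw [← mul_assoc]; exact g2 _ (h2 _ ha)
  · rw [mul_assoc]; exact h3 _ (g3 _ ha)
  · rw [← mul_assoc]; exact g4 _ (h4 _ ha)
end

section
/- Let S be a semigroup, p a congruence on S, and U a union of a family of congruence classes of S modulo p. Then Sep(U) is either empty or a union of congruence classes of S modulo p. -/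
theorem sep_of_union_of_classes {S : Type*} [Semigroup S] (p : Con S) (U : Set S)
    (hU : ∀ a b : S, a ∈ U → p a b → b ∈ U) :
    separator U = ∅ ∨ ∀ a b : S, a ∈ separator U → p a b → b ∈ separator U := by
  right
  intro a b ha hab
  obtain ⟨h1, h2, h3, h4⟩ := ha
  refine ⟨?_, ?_, ?_, ?_⟩
  · intro u hu; exact hU _ _ (h1 u hu) (p.mul hab (p.refl u))
  · intro u hu; exact hU _ _ (h2 u hu) (p.mul (p.refl u) hab)
  · intro u hu hbu
    exact h3 u hu (hU _ _ hbu (p.mul (p.symm hab) (p.refl u)))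
  · intro u hu hub
    exact h4 u hu (hU _ _ hub (p.mul (p.refl u) (p.symm hab)))
end

section
/- Let S be a semigroup, p a congruence on S, U a union of congruence classes modulo p, a ∈ Sep(U), and b ∉ Sep(U). Then (a,b) ∉ p. -/
theorem not_congruent_of_sep {S : Type*} [Semigroup S] (p : Con S) (U : Set S)
    (hU : ∀ a b : S, a ∈ U → p a b → b ∈ U)
    {a b : S} (ha : a ∈ separator U) (hb : b ∉ separator U) : ¬ p a b := by
  intro hab
  obtain ⟨h1, h2, h3, h4⟩ := ha
  apply hb
  refine ⟨?_, ?_, ?_, ?_⟩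
  · intro u hu
    exact hU (a * u) (b * u) (h1 u hu) (p.mul hab (p.refl u))
  · intro u hu
    exact hU (u * a) (u * b) (h2 u hu) (p.mul (p.refl u) hab)
  · intro u hu hmem
    exact h3 u hu (hU (b * u) (a * u) hmem (p.mul (p.symm hab) (p.refl u)))
  · intro u hu hmem
    exact h4 u hu (hU (u * b) (u * a) hmem (p.mul (p.refl u) (p.symm hab)))
end

section
/- Let S be a semigroup, H a subsemigroup of S, and (H_i)_{i∈I} a family of subsets of S with H = ⋂_{i∈I} Sep(H_i). Then each H_i is a union of congruence classes of S modulo the congruence P(H;H_i,I). -/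
theorem Hi_union_of_classes {S : Type*} [Semigroup S] {I : Type*} (H : Set S) (Hi : I → Set S)
    (hH : H.Nonempty) (hmul : ∀ a ∈ H, ∀ b ∈ H, a * b ∈ H)
    (hsep : H = ⋂ i : I, separator (Hi i)) :
    ∀ i : I, ∀ a b : S, a ∈ Hi i →
      (∀ j : I, ∀ x y : S, (x * a * y ∈ Hi j ↔ x * b * y ∈ Hi j)) → b ∈ Hi i := by
  intro i a b ha hab
  obtain ⟨h, hh⟩ := hH
  rw [hsep] at hh
  have hi : h ∈ separator (Hi i) := Set.mem_iInter.mp hh i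
  obtain ⟨hL, hR, hL', hR'⟩ := hi
  have h1 : h * a * h ∈ Hi i := hR _ (hL a ha)
  have h2 : h * b * h ∈ Hi i := (hab i h h).mp h1
  by_contra hb
  exact hR' _ (hL' b hb) h2
end

section
/- Let S be a semigroup, H a subsemigroup of S, and (H_i)_{i∈I} a family of subsets of S with H = ⋂_{i∈I} Sep(H_i). Then H itself is a union of congruence classes of S modulo the congruence P(H;H_i,I). -/
theorem H_union_of_classes {S : Type*} [Semigroup S] {I : Type*} (H : Set S) (Hi : I → Set S)
    (hH : H.Nonempty) (hmul : ∀ a ∈ H, ∀ b ∈ H, a * b ∈ H)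
    (hsep : H = ⋂ i : I, separator (Hi i)) :
    ∀ a b : S, a ∈ H →
      (∀ j : I, ∀ x y : S, (x * a * y ∈ Hi j ↔ x * b * y ∈ Hi j)) → b ∈ H := by
  intro a b ha hP
  rw [hsep] at ha ⊢
  rw [Set.mem_iInter] at ha ⊢
  intro j
  obtain ⟨h1, h2, h3, h4⟩ := ha j
  refine ⟨?_, ?_, ?_, ?_⟩
  · intro c hc
    have key : a * b * c ∈ Hi j := by
      refine (hP j a c).mp ?_
      have : a * (a * c) ∈ Hi j := h1 _ (h1 _ hc)
      rwa [← mul_assoc] at this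
    by_contra hbc
    exact h3 _ hbc (by rwa [mul_assoc] at key)
  · intro c hc
    have key : c * b * a ∈ Hi j := by
      refine (hP j c a).mp ?_
      exact h2 _ (h2 _ hc)
    by_contra hcb
    exact h4 _ hcb key
  · intro c hc
    intro hbc
    have key : a * a * c ∈ Hi j := (hP j a c).mpr (by rw [mul_assoc]; exact h1 _ hbc)
    have hac : a * c ∈ Hi j := by
      by_contra hac
      exact h3 _ hac (by rwa [mul_assoc] at key)
    exact h3 _ hc hac
  · intro c hc
    intro hcb
    have key : c * a * a ∈ Hi j := (hP j c a).mpr (h2 _ hcb)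
    have hca : c * a ∈ Hi j := by
      by_contra hca
      exact h4 _ hca key
    exact h4 _ hc hca
end

section
/- Let S be a commutative semigroup, H a subsemigroup of S, and (H_i)_{i∈I} a family of subsets of S with H = ⋂_{i∈I} Sep(H_i). Then any two elements of H are congruent modulo P(H;H_i,I); that is, H is contained in a single congruence class. -/
lemma sep_iff {S : Type*} [Mul S] {A : Set S} {s : S} (hs : s ∈ separator A) (z : S) :
    z ∈ A ↔ s * z ∈ A := by
  constructor
  · exact hs.1 z
  · intro h; by_contra hz; exact hs.2.2.1 z hz h

theorem H_in_one_class {S : Type*} [CommSemigroup S] {I : Type*} (H : Set S) (Hi : I → Set S)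
    (hH : H.Nonempty) (hmul : ∀ a ∈ H, ∀ b ∈ H, a * b ∈ H)
    (hsep : H = ⋂ i : I, separator (Hi i)) :
    ∀ a ∈ H, ∀ b ∈ H, ∀ j : I, ∀ x y : S, (x * a * y ∈ Hi j ↔ x * b * y ∈ Hi j) := by
  intro a ha b hb j x y
  rw [hsep] at ha hb
  have has : a ∈ separator (Hi j) := Set.mem_iInter.mp ha j
  have hbs : b ∈ separator (Hi j) := Set.mem_iInter.mp hb j
  have key : b * (x * a * y) = a * (x * b * y) := by
    rw [mul_comm x a, mul_comm x b]
    rw [← mul_assoc, ← mul_assoc, ← mul_assoc, ← mul_assoc, mul_comm b a]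
  rw [sep_iff hbs (x * a * y), key, ← sep_iff has (x * b * y)]
end

section
/- Let S be a commutative semigroup, H a subsemigroup of S, and (H_i)_{i∈I} a family of subsets with H = ⋂_{i∈I} Sep(H_i). Then H is exactly one congruence class of P(H;H_i,I), and this class is an identity element of the factor semigroup S/P(H;H_i,I); i.e., for all u ∈ S and a ∈ H, (ua, u) ∈ P(H;H_i,I). -/
theorem H_is_identity_class {S : Type*} [CommSemigroup S] {I : Type*} (H : Set S) (Hi : I → Set S)
    (hH : H.Nonempty) (hmul : ∀ a ∈ H, ∀ b ∈ H, a * b ∈ H)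
    (hsep : H = ⋂ i : I, separator (Hi i)) :
    (∀ a ∈ H, ∀ b : S,
      ((∀ j : I, ∀ x y : S, (x * a * y ∈ Hi j ↔ x * b * y ∈ Hi j)) ↔ b ∈ H)) ∧
    (∀ u : S, ∀ a ∈ H, ∀ j : I, ∀ x y : S,
      (x * (u * a) * y ∈ Hi j ↔ x * u * y ∈ Hi j)) := by
  have key : ∀ j : I, ∀ s ∈ H, ∀ z : S, s * z ∈ Hi j ↔ z ∈ Hi j := by
    intro j s hs z
    have hs' : s ∈ separator (Hi j) := by
      rw [hsep] at hs; exact Set.mem_iInter.mp hs j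
    obtain ⟨h1, h2, h3, h4⟩ := hs'
    constructor
    · intro h
      by_contra hz
      exact h3 z hz h
    · intro h
      exact h1 z h
  constructor
  · intro a ha b
    constructor
    · intro hrel
      have E : ∀ j : I, ∀ c : S, b * c ∈ Hi j ↔ c ∈ Hi j := by
        intro j c
        have h := hrel j a c
        rw [mul_assoc, mul_assoc] at h
        simp only [key j a ha] at h
        exact h.symm
      rw [hsep]
      refine Set.mem_iInter.mpr fun j => ⟨fun c hc => (E j c).mpr hc,
        fun c hc => ?_, fun c hc hbc => hc ((E j c).mp hbc), fun c hc hcb => ?_⟩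
      · rw [mul_comm]; exact (E j c).mpr hc
      · rw [mul_comm] at hcb; exact hc ((E j c).mp hcb)
    · intro hb j x y
      have e1 : x * a * y = a * (x * y) := by
        rw [mul_comm x a, mul_assoc]
      have e2 : x * b * y = b * (x * y) := by
        rw [mul_comm x b, mul_assoc]
      rw [e1, e2, key j a ha, key j b hb]
  · intro u a ha j x y
    have e : x * (u * a) * y = a * (x * u * y) := by
      rw [mul_comm u a, ← mul_assoc, mul_assoc (x * a) u y,
        mul_comm x a, mul_assoc, mul_assoc]
    rw [e, key j a ha]
end

section
/- Let S be a commutative semigroup and p a monoid congruence on S (i.e., S/p is a monoid). Let H be the congruence class of p that is the identity element of S/p, and let {S_k : k ∈ K} be the set of all congruence classes of p. Then H = ⋂_{k∈K} Sep(S_k). -/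
theorem identity_class_eq_inter_sep {S : Type*} [CommSemigroup S] (p : Con S) (h : S)
    (hid : ∀ u : S, p (u * h) u ∧ p (h * u) u) :
    {x : S | p x h} = ⋂ s : S, separator {x : S | p x s} := by
  ext x
  simp only [Set.mem_setOf_eq, Set.mem_iInter]
  constructor
  · intro hx s
    have key : ∀ a : S, p (x * a) a := fun a =>
      p.trans (p.mul hx (p.refl a)) (hid a).2
    have key' : ∀ a : S, p (a * x) a := fun a => by
      rw [mul_comm]; exact key a
    refine ⟨fun a ha => p.trans (key a) ha, fun a ha => p.trans (key' a) ha,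
      fun a ha hc => ha (p.trans (p.symm (key a)) hc),
      fun a ha hc => ha (p.trans (p.symm (key' a)) hc)⟩
  · intro hx
    have := (hx h).1 h (p.refl h)
    exact p.trans (p.symm (hid x).2) (by rwa [mul_comm] at this)
end

section
/- Let S be a commutative semigroup and p a monoid congruence on S with identity class H and set of all congruence classes {S_k : k ∈ K}. Then p equals the congruence P(H; S_k, K), i.e., (a,b) ∈ p if and only if for every k ∈ K and all x,y ∈ S, xay ∈ S_k ↔ xby ∈ S_k. -/
theorem monoid_congruence_eq_P {S : Type*} [CommSemigroup S] (p : Con S) (h : S)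
    (hid : ∀ u : S, p (u * h) u ∧ p (h * u) u) :
    ∀ a b : S, p a b ↔ ∀ s x y : S, (p (x * a * y) s ↔ p (x * b * y) s) := by
  intro a b
  constructor
  · intro hab s x y
    have : p (x * a * y) (x * b * y) := p.mul (p.mul (p.refl x) hab) (p.refl y)
    exact ⟨fun h1 => p.trans (p.symm this) h1, fun h1 => p.trans this h1⟩
  · intro H
    have h1 : p (h * a * h) a := p.trans (p.mul (hid a).2 (p.refl h)) (hid a).1
    have h2 : p (h * b * h) b := p.trans (p.mul (hid b).2 (p.refl h)) (hid b).1
    have := (H (h * b * h) h h).2 (p.refl _)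
    exact p.trans (p.symm h1) (p.trans this h2)
end

section
/- Every monoid congruence on a commutative semigroup S arises as P(H;H_i,I) for a subsemigroup H of S and a family (H_i)_{i∈I} of subsets with H = ⋂_{i∈I} Sep(H_i): namely, take H the identity class and (H_i) the family of all congruence classes. -/
theorem monoid_congruence_arises {S : Type*} [CommSemigroup S] (p : Con S) (h : S)
    (hid : ∀ u : S, p (u * h) u ∧ p (h * u) u) :
    {x : S | p x h} = (⋂ s : S, separator {x : S | p x s}) ∧
    (∀ a b : S, p a b ↔ ∀ s x y : S, (x * a * y ∈ {z : S | p z s} ↔ x * b * y ∈ {z : S | p z s})) := by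
  constructor
  · ext x
    simp only [Set.mem_iInter, Set.mem_setOf_eq]
    constructor
    · intro hx s
      have key : ∀ a : S, p (x * a) a := fun a =>
        p.trans (p.mul hx (p.refl a)) (hid a).2
      have key' : ∀ a : S, p (a * x) a := fun a => by
        rw [mul_comm]; exact key a
      refine ⟨fun a ha => p.trans (key a) ha, fun a ha => p.trans (key' a) ha,
        fun a ha hc => ha (p.trans (p.symm (key a)) hc),
        fun a ha hc => ha (p.trans (p.symm (key' a)) hc)⟩
    · intro hx
      have := (hx h).1 h (p.refl h)
      exact p.trans (p.symm (hid x).1) this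
  · intro a b
    constructor
    · intro hab s x y
      simp only [Set.mem_setOf_eq]
      constructor
      · intro hxa
        exact p.trans (p.mul (p.mul (p.refl x) (p.symm hab)) (p.refl y)) hxa
      · intro hxb
        exact p.trans (p.mul (p.mul (p.refl x) hab) (p.refl y)) hxb
    · intro H
      have ha : p (h * a * h) a := p.trans ((hid (h * a)).1) (hid a).2
      have hb : p (h * b * h) b := p.trans ((hid (h * b)).1) (hid b).2
      have := (H a h h).1 ha
      exact p.trans (p.symm this) hb
end

section
/- Let S be a commutative semigroup, p a monoid congruence on S with identity class H, and let (H_i)_{i∈I} be the family of all subsets A ⊆ S with H ⊆ Sep(A). Then P(H;H_i,I) ⊆ p ⊆ P_H. -/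
theorem P_le_p_le_PH {S : Type*} [CommSemigroup S] (p : Con S) (h : S)
    (hid : ∀ u : S, p (u * h) u ∧ p (h * u) u) :
    (∀ a b : S,
      (∀ A : Set S, {x : S | p x h} ⊆ separator A → ∀ x y : S, (x * a * y ∈ A ↔ x * b * y ∈ A)) →
        p a b) ∧
    (∀ a b : S, p a b →
      ∀ x y : S, (x * a * y ∈ {z : S | p z h} ↔ x * b * y ∈ {z : S | p z h})) := by
  constructor
  · intro a b hab
    -- take A = p-class of a
    have hsep : {x : S | p x h} ⊆ separator {z : S | p z a} := by
      intro u hu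
      have key : ∀ z : S, p (u * z) z := fun z =>
        p.trans (p.mul hu (p.refl z)) (hid z).2
      have key' : ∀ z : S, p (z * u) z := fun z => by
        have := key z; rwa [mul_comm] at this
      refine ⟨fun z hz => p.trans (key z) hz,
              fun z hz => p.trans (key' z) hz,
              fun z hz hc => hz (p.trans (p.symm (key z)) hc),
              fun z hz hc => hz (p.trans (p.symm (key' z)) hc)⟩
    have h1 : p (h * a * h) a := p.trans (hid (h * a)).1 (hid a).2
    have h2 : p (h * b * h) b := p.trans (hid (h * b)).1 (hid b).2
    have := (hab _ hsep h h).mp h1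
    exact p.symm (p.trans (p.symm h2) this)
  · intro a b hab x y
    have : p (x * a * y) (x * b * y) := p.mul (p.mul (p.refl x) hab) (p.refl y)
    exact ⟨fun hz => p.trans (p.symm this) hz, fun hz => p.trans this hz⟩
end

section
/- Let S be a semigroup and H a unitary subsemigroup of S. Then Sep(H) = H. -/
theorem sep_of_unitary {S : Type*} [Semigroup S] (H : Set S)
    (hH : H.Nonempty) (hmul : ∀ a ∈ H, ∀ b ∈ H, a * b ∈ H)
    (hu : ∀ a b : S, (a * b ∈ H → a ∈ H → b ∈ H) ∧ (a * b ∈ H → b ∈ H → a ∈ H)) :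
    separator H = H := by
  ext x
  constructor
  · rintro ⟨_, h2, _, _⟩
    obtain ⟨h, hh⟩ := hH
    exact (hu h x).1 (h2 h hh) hh
  · intro hx
    refine ⟨fun a ha => hmul x hx a ha, fun a ha => hmul a ha x hx,
      fun a ha hxa => ha ((hu x a).1 hxa hx), fun a ha hax => ha ((hu a x).2 hax hx)⟩
end

section
/- Let S be a semigroup and A ⊆ S. If Sep(A) ∩ A ≠ ∅, then Sep(A) ⊆ A; consequently, either Sep(A) ⊆ A or Sep(A) ⊆ S∖A. -/
theorem sep_subset_or {S : Type*} [Semigroup S] (A : Set S) :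
    ((separator A ∩ A).Nonempty → separator A ⊆ A) ∧ (separator A ⊆ A ∨ separator A ⊆ Aᶜ) := by
  have key : (separator A ∩ A).Nonempty → separator A ⊆ A := by
    rintro ⟨s, hs, hsA⟩ x hx
    by_contra hxA
    exact hs.2.2.1 x hxA (hx.2.1 s hsA)
  refine ⟨key, ?_⟩
  by_cases h : (separator A ∩ A).Nonempty
  · exact Or.inl (key h)
  · exact Or.inr fun x hx hxA => h ⟨x, hx, hxA⟩
end

section
/- A commutative semigroup S has a non-universal monoid congruence if and only if there exists a subset A of S with ∅ ⊊ A ⊊ S such that Sep(A) ≠ ∅. -/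
private lemma iter_mul_left {S : Type*} [CommSemigroup S] (x : S) :
    ∀ (m : ℕ) (a b : S), ((x * ·)^[m] a) * b = (x * ·)^[m] (a * b) := by
  intro m
  induction m with
  | zero => intro a b; simp
  | succ n ih =>
    intro a b
    simp only [Function.iterate_succ_apply']
    rw [mul_assoc, ih]

private lemma iter_mul {S : Type*} [CommSemigroup S] (x : S) (m n : ℕ) (a b : S) :
    ((x * ·)^[m] a) * ((x * ·)^[n] b) = (x * ·)^[m + n] (a * b) := by
  rw [iter_mul_left, mul_comm, iter_mul_left, ← Function.iterate_add_apply]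
  rw [mul_comm b a]

private lemma iter_mem {S : Type*} [CommSemigroup S] {A : Set S} {x : S}
    (hx : x ∈ separator A) (m : ℕ) (a : S) : (x * ·)^[m] a ∈ A ↔ a ∈ A := by
  induction m with
  | zero => simp
  | succ n ih =>
    simp only [Function.iterate_succ_apply']
    constructor
    · intro h
      by_contra ha
      exact hx.2.2.1 _ (ih.not.mpr ha) h
    · intro h
      exact hx.1 _ (ih.mpr h)

theorem exists_monoid_congruence_iff {S : Type*} [CommSemigroup S] :
    (∃ p : Con S, (∃ e : p.Quotient, ∀ x : p.Quotient, e * x = x ∧ x * e = x) ∧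
        ¬ ∀ a b : S, p a b) ↔
    ∃ A : Set S, A.Nonempty ∧ A ≠ Set.univ ∧ (separator A).Nonempty := by
  constructor
  · rintro ⟨p, ⟨e, he⟩, hnu⟩
    obtain ⟨s, hs0⟩ := Quot.exists_rep e
    have hs : (s : p.Quotient) = e := hs0
    refine ⟨{y | (y : p.Quotient) = e}, ⟨s, hs⟩, ?_, ⟨s, ?_, ?_, ?_, ?_⟩⟩
    · intro hA
      apply hnu
      intro a b
      have ha : (a : p.Quotient) = e := by
        have := Set.eq_univ_iff_forall.mp hA a; exact this
      have hb : (b : p.Quotient) = e := by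
        have := Set.eq_univ_iff_forall.mp hA b; exact this
      exact p.eq.mp (ha.trans hb.symm)
    all_goals intro a ha
    · show ((s * a : S) : p.Quotient) = e
      rw [Con.coe_mul, hs, (he _).1, ha]
    · show ((a * s : S) : p.Quotient) = e
      rw [Con.coe_mul, hs, (he _).2, ha]
    · show ¬ ((s * a : S) : p.Quotient) = e
      rw [Con.coe_mul, hs, (he _).1]; exact ha
    · show ¬ ((a * s : S) : p.Quotient) = e
      rw [Con.coe_mul, hs, (he _).2]; exact ha
  · rintro ⟨A, ⟨a0, ha0⟩, hA, ⟨x, hx⟩⟩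
    let p : Con S :=
      { r := fun a b => ∃ m n : ℕ, (x * ·)^[m] a = (x * ·)^[n] b
        iseqv := by
          refine ⟨fun a => ⟨0, 0, rfl⟩, ?_, ?_⟩
          · rintro a b ⟨m, n, h⟩; exact ⟨n, m, h.symm⟩
          · rintro a b c ⟨m, n, h1⟩ ⟨p, q, h2⟩
            refine ⟨p + m, n + q, ?_⟩
            rw [Function.iterate_add_apply, h1, ← Function.iterate_add_apply,
              Nat.add_comm p n, Function.iterate_add_apply, h2,
              ← Function.iterate_add_apply]
        mul' := by
          rintro a b c d ⟨m, n, h1⟩ ⟨p, q, h2⟩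
          refine ⟨m + p, n + q, ?_⟩
          rw [← iter_mul, h1, h2, iter_mul] }
    refine ⟨p, ⟨(x : p.Quotient), ?_⟩, ?_⟩
    · intro q
      induction q using Quotient.inductionOn with
      | h a =>
        constructor
        · show ((x * a : S) : p.Quotient) = (a : S)
          exact p.eq.mpr ⟨0, 1, rfl⟩
        · show ((a * x : S) : p.Quotient) = (a : S)
          exact p.eq.mpr ⟨0, 1, by simp [mul_comm]⟩
    · intro hall
      obtain ⟨b0, hb0⟩ : ∃ b, b ∉ A := by
        by_contra h
        push_neg at h
        exact hA (Set.eq_univ_iff_forall.mpr h)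
      obtain ⟨m, n, h⟩ := hall a0 b0
      have : (x * ·)^[m] a0 ∈ A := (iter_mem hx m a0).mpr ha0
      rw [h] at this
      exact hb0 ((iter_mem hx n b0).mp this)
end

section
/- Let S be a commutative semigroup and A ⊆ S with ∅ ⊊ A ⊊ S and Sep(A) ≠ ∅. Then P_A = {(a,b) : for all x,y ∈ S, xay ∈ A ↔ xby ∈ A} is a non-universal monoid congruence on S, and Sep(A) is contained in the identity class of S/P_A. -/
theorem PA_monoid_congruence {S : Type*} [CommSemigroup S] (A : Set S)
    (hne : A.Nonempty) (hA : A ≠ Set.univ) (hsep : (separator A).Nonempty) :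
    ∃ c : Con S,
      (∀ a b : S, c a b ↔ ∀ x y : S, (x * a * y ∈ A ↔ x * b * y ∈ A)) ∧
      (¬ ∀ a b : S, c a b) ∧
      (∀ s ∈ separator A, ∀ u : S, c (u * s) u ∧ c (s * u) u) := by
  have key : ∀ p q a b : S, p * (a * b) * q = p * a * (b * q) := by
    intro p q a b
    rw [← mul_assoc p a b, mul_assoc (p * a) b q]
  refine ⟨{ r := fun a b => ∀ x y : S, (x * a * y ∈ A ↔ x * b * y ∈ A)
            iseqv := ⟨fun a x y => Iff.rfl, fun h x y => (h x y).symm,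
                      fun h1 h2 x y => (h1 x y).trans (h2 x y)⟩
            mul' := ?_ }, fun a b => Iff.rfl, ?_, ?_⟩
  · intro w x y z h1 h2 p q
    rw [key p q w y, key p q x z, h1 p (y * q), ← mul_assoc (p * x) y q,
      h2 (p * x) q, mul_assoc (p * x) z q]
  · intro h
    obtain ⟨a, ha⟩ := hne
    obtain ⟨b, hb⟩ := Set.ne_univ_iff_exists_notMem A |>.mp hA
    obtain ⟨s, hs1, hs2, hs3, hs4⟩ := hsep
    exact hs4 _ (hs3 b hb) ((h a b s s).mp (hs2 _ (hs1 a ha)))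
  · intro s hs u
    obtain ⟨hs1, hs2, hs3, hs4⟩ := hs
    have hiff : ∀ z : S, z * s ∈ A ↔ z ∈ A := fun z =>
      ⟨fun h => by_contra fun hz => hs4 z hz h, hs2 z⟩
    have e : ∀ x y : S, x * (u * s) * y = x * u * y * s := by
      intro x y
      rw [key x y u s, mul_comm s y, ← mul_assoc (x * u) y s]
    constructor
    · intro x y; rw [e x y, hiff]
    · intro x y; rw [mul_comm s u, e x y, hiff]
end
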